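/- Let G(P) be a linearly generic framework of a connected graph G and let w be a non-zero self-stress on G(P). Then w is everywhere non-zero: w_{i,j} ≠ 0 for every edge (v_i; v_j) of G. -/
import Mathlib

lemma key_lemma (V : Type) [Fintype V] [DecidableEq V] (G : SimpleGraph V)
    [DecidableRel G.Adj]
    (d : ℕ) (p : V → Fin d → ℝ)
    (hgen_rank : ∀ v : V,
      Module.finrank ℝ ↥(Submodule.span ℝ
        ((fun u => p u - p v) '' (G.neighborFinset v : Set V))) = G.degree v - 1)
    (hgen_sub : ∀ v : V, ∀ u ∈ G.neighborFinset v,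
      Submodule.span ℝ ((fun x => p x - p v) '' ((G.neighborFinset v : Set V) \ {u})) =
        Submodule.span ℝ ((fun x => p x - p v) '' (G.neighborFinset v : Set V)))
    (w : V → V → ℝ)
    (hself : ∀ v : V, 1 < G.degree v →
      ∑ u ∈ G.neighborFinset v, w v u • (p v - p u) = 0)
    (v : V) (hd : 1 < G.degree v) (u : V) (hu : u ∈ G.neighborFinset v)
    (h0 : w v u = 0) : ∀ u' ∈ G.neighborFinset v, w v u' = 0 := by
  classical
  set e : V → Fin d → ℝ := fun x => p x - p v with he
  set s : Finset V := G.neighborFinset v \ {u} with hs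
  have hscard : s.card = G.degree v - 1 := by
    rw [hs, Finset.card_sdiff_of_subset (Finset.singleton_subset_iff.mpr hu),
      Finset.card_singleton, SimpleGraph.degree]
  have hcoe : ((s : Set V)) = (G.neighborFinset v : Set V) \ {u} := by
    simp [hs]
  have hspan : Submodule.span ℝ (e '' (s : Set V)) =
      Submodule.span ℝ (e '' (G.neighborFinset v : Set V)) := by
    rw [hcoe]; exact hgen_sub v u hu
  have hfr : Module.finrank ℝ ↥(Submodule.span ℝ (e '' (s : Set V))) = s.card := by
    rw [hspan, hgen_rank v, hscard]
  have hli : LinearIndependent ℝ (fun x : ↥s => e x) := by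
    rw [linearIndependent_iff_card_eq_finrank_span]
    have hr : Set.range (fun x : ↥s => e x) = e '' (s : Set V) := by
      ext z; simp [Set.mem_image]
    rw [Set.finrank, hr, hfr, Fintype.card_coe]
  have h2 : ∑ x ∈ G.neighborFinset v, w v x • e x = 0 := by
    have h1 := hself v hd
    have heq : ∑ x ∈ G.neighborFinset v, w v x • e x
        = - ∑ x ∈ G.neighborFinset v, w v x • (p v - p x) := by
      rw [← Finset.sum_neg_distrib]
      apply Finset.sum_congr rfl
      intro x _
      rw [he]
      rw [← smul_neg, neg_sub]
    rw [heq, h1, neg_zero]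
  have hsum : ∑ x ∈ s, w v x • e x = 0 := by
    have hsplit := Finset.sum_eq_sum_sdiff_singleton_add hu (fun x => w v x • e x)
    rw [hsplit, h0, zero_smul, add_zero] at h2
    exact h2
  have hzero : ∀ x ∈ s, w v x = 0 := by
    have := Fintype.linearIndependent_iff.mp hli (fun x : ↥s => w v x) ?_
    · intro x hx; exact this ⟨x, hx⟩
    · rw [← Finset.sum_attach s (fun x => w v x • e x)] at hsum
      exact hsum
  intro u' hu'
  by_cases h : u' = u
  · rw [h]; exact h0
  · exact hzero u' (by simp [hs, hu', h])


/-- A non-zero self-stress on a connected linearly generic framework is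
everywhere non-zero. -/
theorem stmt_8 (V : Type) [Fintype V] [DecidableEq V] (G : SimpleGraph V)
    [DecidableRel G.Adj] (hconn : G.Connected)
    (d : ℕ) (p : V → Fin d → ℝ)
    (hgen_rank : ∀ v : V,
      Module.finrank ℝ ↥(Submodule.span ℝ
        ((fun u => p u - p v) '' (G.neighborFinset v : Set V))) = G.degree v - 1)
    (hgen_sub : ∀ v : V, ∀ u ∈ G.neighborFinset v,
      Submodule.span ℝ ((fun x => p x - p v) '' ((G.neighborFinset v : Set V) \ {u})) =
        Submodule.span ℝ ((fun x => p x - p v) '' (G.neighborFinset v : Set V)))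
    (w : V → V → ℝ)
    (hsymm : ∀ u v, w u v = w v u)
    (hsupp : ∀ u v, ¬ G.Adj u v → w u v = 0)
    (hself : ∀ v : V, 1 < G.degree v →
      ∑ u ∈ G.neighborFinset v, w v u • (p v - p u) = 0)
    (hnz : ∃ u v, G.Adj u v ∧ w u v ≠ 0) :
    ∀ u v : V, G.Adj u v → w u v ≠ 0 := by
  classical
  have spread : ∀ x y z : V, G.Adj x y → w x y = 0 → G.Adj x z → w x z = 0 := by
    intro x y z hxy h0 hxz
    by_cases hd : 1 < G.degree x
    · exact key_lemma V G d p hgen_rank hgen_sub w hself x hd y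
        ((SimpleGraph.mem_neighborFinset G x y).mpr hxy) h0 z
        ((SimpleGraph.mem_neighborFinset G x z).mpr hxz)
    · have hy : y ∈ G.neighborFinset x := (SimpleGraph.mem_neighborFinset G x y).mpr hxy
      have hz : z ∈ G.neighborFinset x := (SimpleGraph.mem_neighborFinset G x z).mpr hxz
      have hle : (G.neighborFinset x).card ≤ 1 := by
        have h1 : G.degree x ≤ 1 := Nat.le_of_not_lt hd
        rw [← SimpleGraph.card_neighborFinset_eq_degree] at h1
        exact h1
      have : z = y := Finset.card_le_one.mp hle z hz y hy
      rw [this]; exact h0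
  have walkprop : ∀ (x u' : V), G.Walk x u' →
      (∃ y, G.Adj x y ∧ w x y = 0) → ∀ z, G.Adj u' z → w u' z = 0 := by
    intro x u' W
    induction W with
    | nil =>
      rintro ⟨y, hy, h0⟩ z hz
      exact spread _ y z hy h0 hz
    | @cons a b c h W ih =>
      rintro ⟨y, hy, h0⟩ z hz
      have hab : w a b = 0 := spread a y b hy h0 h
      have hba : w b a = 0 := by rw [hsymm]; exact hab
      exact ih ⟨a, h.symm, hba⟩ z hz
  intro u v hadj h0
  obtain ⟨a, b, hab, hwab⟩ := hnz
  obtain ⟨W⟩ := hconn.preconnected u a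
  exact hwab (walkprop u a W ⟨v, hadj, h0⟩ b hab)
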